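/- Let A ∈ ℝ^{n×d}, b ∈ ℝ^n, λ > 0, and p ≥ 1. Let A′ ∈ ℝ^{(n+1)×(d+1)} be the block matrix whose first n rows are [A, −b] and whose last row is a′ := (0,…,0,−λ). Then the ℓp sensitivity of the last row of A′ with respect to A′ satisfies σ_p^{A′}(a′) = λ^p / (λ^p + inf_{y∈ℝ^d} ‖Ay − b‖_p^p). Equivalently, inf_{y∈ℝ^d} ‖Ay − b‖_p^p = λ^p / σ_p^{A′}(a′) − λ^p. -/

import Mathlib

open Matrix BigOperators

/-- The ℓp sensitivity of a vector `a` with respect to a matrix `B`: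
`σ_p^B(a) = sup { |⟨a,x⟩|^p / ‖Bx‖_p^p : x, Bx ≠ 0 }`. -/
noncomputable def sens (p : ℝ) {m d : ℕ} (B : Matrix (Fin m) (Fin d) ℝ)
    (a : Fin d → ℝ) : ℝ :=
  sSup {r : ℝ | ∃ x : Fin d → ℝ, B.mulVec x ≠ 0 ∧
    r = |a ⬝ᵥ x| ^ p / ∑ i, |B.mulVec x i| ^ p}

/-- The augmented matrix `A' ∈ ℝ^{(n+1)×(d+1)}` whose first `n` rows are `[A, -b]`
and whose last row is `(0,…,0,-λ)`. -/
noncomputable def augmented {n d : ℕ} (A : Matrix (Fin n) (Fin d) ℝ)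
    (b : Fin n → ℝ) (lam : ℝ) : Matrix (Fin (n + 1)) (Fin (d + 1)) ℝ :=
  Matrix.of (Fin.snoc (fun i => Fin.snoc (A i) (-(b i)))
    (Fin.snoc (0 : Fin d → ℝ) (-lam)))

lemma aug_mulVec_castSucc {n d : ℕ} (A : Matrix (Fin n) (Fin d) ℝ) (b : Fin n → ℝ)
    (lam : ℝ) (x : Fin (d + 1) → ℝ) (i : Fin n) :
    (augmented A b lam).mulVec x (Fin.castSucc i)
      = A.mulVec (fun j => x (Fin.castSucc j)) i - b i * x (Fin.last d) := by
  simp [augmented, Matrix.mulVec, dotProduct, Fin.sum_univ_castSucc]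
  ring

lemma aug_mulVec_last {n d : ℕ} (A : Matrix (Fin n) (Fin d) ℝ) (b : Fin n → ℝ)
    (lam : ℝ) (x : Fin (d + 1) → ℝ) :
    (augmented A b lam).mulVec x (Fin.last n) = -(lam * x (Fin.last d)) := by
  simp [augmented, Matrix.mulVec, dotProduct, Fin.sum_univ_castSucc]

lemma snoc_dot {d : ℕ} (lam : ℝ) (x : Fin (d + 1) → ℝ) :
    (Fin.snoc (0 : Fin d → ℝ) (-lam)) ⬝ᵥ x = -(lam * x (Fin.last d)) := by
  simp [dotProduct, Fin.sum_univ_castSucc]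

/-- **ℓp regression reduces to ℓp sensitivities:** the sensitivity of the last row
`a' = (0,…,0,-λ)` of the augmented matrix `A' = [A, -b; 0, -λ]` equals
`λ^p / (λ^p + inf_y ‖Ay - b‖_p^p)`; equivalently,
`inf_y ‖Ay - b‖_p^p = λ^p / σ_p^{A'}(a') - λ^p`. -/
theorem lp_regression_reduces_to_sensitivity
    {n d : ℕ} (A : Matrix (Fin n) (Fin d) ℝ) (b : Fin n → ℝ)
    (lam : ℝ) (hlam : 0 < lam) (p : ℝ) (hp : 1 ≤ p) :
    sens p (augmented A b lam) (Fin.snoc (0 : Fin d → ℝ) (-lam))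
        = lam ^ p / (lam ^ p +
          sInf {r : ℝ | ∃ y : Fin d → ℝ, r = ∑ i, |A.mulVec y i - b i| ^ p}) ∧
      sInf {r : ℝ | ∃ y : Fin d → ℝ, r = ∑ i, |A.mulVec y i - b i| ^ p}
        = lam ^ p / sens p (augmented A b lam) (Fin.snoc (0 : Fin d → ℝ) (-lam))
          - lam ^ p := by
  have hp0 : p ≠ 0 := by linarith
  set L := lam ^ p with hLdef
  have hL : 0 < L := Real.rpow_pos_of_pos hlam p
  set T := {r : ℝ | ∃ y : Fin d → ℝ, r = ∑ i, |A.mulVec y i - b i| ^ p} with hTdef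
  have hTne : T.Nonempty := ⟨_, 0, rfl⟩
  have hTnn : ∀ r ∈ T, (0:ℝ) ≤ r := by
    rintro r ⟨y, rfl⟩
    exact Finset.sum_nonneg fun i _ => Real.rpow_nonneg (abs_nonneg _) _
  have hTbdd : BddBelow T := ⟨0, fun r hr => hTnn r hr⟩
  set R := sInf T with hRdef
  have hR0 : 0 ≤ R := le_csInf hTne hTnn
  have haLR : 0 < L + R := by linarith
  have hRle : ∀ y : Fin d → ℝ, R ≤ ∑ i, |A.mulVec y i - b i| ^ p :=
    fun y => csInf_le hTbdd ⟨y, rfl⟩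
  set S := {r : ℝ | ∃ x : Fin (d + 1) → ℝ, (augmented A b lam).mulVec x ≠ 0 ∧
    r = |(Fin.snoc (0 : Fin d → ℝ) (-lam)) ⬝ᵥ x| ^ p /
      ∑ i, |(augmented A b lam).mulVec x i| ^ p} with hSdef
  have hsens : sens p (augmented A b lam) (Fin.snoc (0 : Fin d → ℝ) (-lam)) = sSup S := rfl
  -- the sum of |A'x|^p splits
  have hsum : ∀ x : Fin (d + 1) → ℝ,
      ∑ i, |(augmented A b lam).mulVec x i| ^ p
        = (∑ i, |A.mulVec (fun j => x (Fin.castSucc j)) i - b i * x (Fin.last d)| ^ p)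
          + (lam * |x (Fin.last d)|) ^ p := by
    intro x
    rw [Fin.sum_univ_castSucc]
    congr 1
    · exact Finset.sum_congr rfl fun i _ => by rw [aug_mulVec_castSucc]
    · rw [aug_mulVec_last, abs_neg, abs_mul, abs_of_pos hlam]
  -- scaling
  have hscale : ∀ (y : Fin d → ℝ) (t : ℝ), t ≠ 0 →
      ∑ i, |A.mulVec y i - b i * t| ^ p
        = |t| ^ p * ∑ i, |A.mulVec (t⁻¹ • y) i - b i| ^ p := by
    intro y t ht
    rw [Finset.mul_sum]
    refine Finset.sum_congr rfl fun i _ => ?_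
    rw [Matrix.mulVec_smul]
    have he : A.mulVec y i - b i * t = t * ((t⁻¹ • A.mulVec y) i - b i) := by
      simp only [Pi.smul_apply, smul_eq_mul]
      field_simp
    rw [he, abs_mul, Real.mul_rpow (abs_nonneg _) (abs_nonneg _)]
  -- upper bound on each element of S
  have hub : ∀ r ∈ S, r ≤ L / (L + R) := by
    rintro r ⟨x, hx, rfl⟩
    set t := x (Fin.last d) with htdef
    rcases eq_or_ne t 0 with ht | ht
    · rw [snoc_dot, ← htdef, ht, mul_zero, neg_zero, abs_zero, Real.zero_rpow hp0, zero_div]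
      positivity
    · rw [snoc_dot, ← htdef, hsum, ← htdef]
      have htp : 0 < |t| ^ p := Real.rpow_pos_of_pos (abs_pos.mpr ht) p
      set C := ∑ i, |A.mulVec (t⁻¹ • fun j => x (Fin.castSucc j)) i - b i| ^ p with hCdef
      have hC : R ≤ C := hRle _
      have e1 : |(-(lam * t))| ^ p = L * |t| ^ p := by
        rw [abs_neg, abs_mul, abs_of_pos hlam, Real.mul_rpow hlam.le (abs_nonneg t)]
      have e2 : (lam * |t|) ^ p = L * |t| ^ p :=
        Real.mul_rpow hlam.le (abs_nonneg t)
      rw [e1, e2, hscale _ t ht, ← hCdef,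
        show |t| ^ p * C + L * |t| ^ p = |t| ^ p * (C + L) by ring,
        show L * |t| ^ p = |t| ^ p * L by ring,
        mul_div_mul_left _ _ htp.ne']
      exact div_le_div_of_nonneg_left hL.le haLR (by linarith)
  have hSbdd : BddAbove S := ⟨_, hub⟩
  have h1 : sSup S ≤ L / (L + R) := Real.sSup_le hub (by positivity)
  have h2 : L / (L + R) ≤ sSup S := by
    refine le_of_forall_pos_le_add fun ε hε => ?_
    obtain ⟨C, hCT, hClt⟩ := Real.lt_sInf_add_pos hTne (mul_pos hε hL)
    obtain ⟨y, rfl⟩ := hCT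
    set x : Fin (d + 1) → ℝ := Fin.snoc y 1 with hxdef
    have hxlast : x (Fin.last d) = 1 := Fin.snoc_last _ _
    have hxcast : (fun j => x (Fin.castSucc j)) = y := funext fun j => Fin.snoc_castSucc _ _ j
    have hAx : (augmented A b lam).mulVec x ≠ 0 := by
      intro h0
      have := congrFun h0 (Fin.last n)
      rw [aug_mulVec_last, hxlast, mul_one, Pi.zero_apply, neg_eq_zero] at this
      exact hlam.ne' this
    set Fy := ∑ i, |A.mulVec y i - b i| ^ p with hFydef
    have hrval : |(Fin.snoc (0 : Fin d → ℝ) (-lam)) ⬝ᵥ x| ^ p /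
        ∑ i, |(augmented A b lam).mulVec x i| ^ p = L / (Fy + L) := by
      rw [snoc_dot, hsum, hxlast, hxcast, mul_one, abs_neg, abs_of_pos hlam, abs_one, mul_one]
      simp only [mul_one, hFydef]
      rfl
    have hrS : L / (Fy + L) ∈ S := ⟨x, hAx, hrval.symm⟩
    have hrle : L / (Fy + L) ≤ sSup S := le_csSup hSbdd hrS
    have hRF : R ≤ Fy := hRle y
    have hd2 : 0 < Fy + L := by linarith
    have key : L / (L + R) ≤ L / (Fy + L) + ε := by
      rw [← hRdef] at hClt
      rw [div_add' _ _ _ hd2.ne', div_le_div_iff₀ haLR hd2]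
      have hm : L * L ≤ (Fy + L) * (L + R) :=
        mul_le_mul (by linarith) (by linarith) hL.le (by linarith)
      have hm2 : L * Fy < L * (R + ε * L) := by
        have := mul_lt_mul_of_pos_left hClt hL
        linarith
      have hm3 : ε * (L * L) ≤ ε * ((Fy + L) * (L + R)) :=
        mul_le_mul_of_nonneg_left hm hε.le
      nlinarith [hm2, hm3]
    linarith
  have hσ : sSup S = L / (L + R) := le_antisymm h1 h2
  refine ⟨by rw [hsens, hσ], ?_⟩
  rw [hsens, hσ]
  have hLR : L / (L / (L + R)) = L + R := by
    rw [div_div_eq_mul_div, mul_comm, mul_div_assoc, div_self hL.ne', mul_one]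
  rw [hLR]
  ring
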